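/- arXiv:1405.6548 — 2 statements merged into one kernel-verified Lean document; each statement's English description precedes it below -/
import Mathlib

section
/- Let b₀, b₁ be functions on B₁ ⊂ ℝ^n with b_i(x₀) known values and C^{1,1} bounds M := ‖b₀‖_{C²} + ‖b₁‖_{C²}. Fix x₀ with b₀(x₀) = b₁(x₀). Then for r ≤ 1/(1+M) times |∇(b₁−b₀)(x₀)| and all x in the ball B_r(x₀): min{b₀,b₁}(x) > b₀(x₀) − 2r'|∇(b₁−b₀)(x₀)|² + ⟨∇b₀(x₀), x−x₀⟩, where r' = r/|∇(b₁−b₀)(x₀)| (assuming the gradient is nonzero). -/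
open MeasureTheory Metric

/-- Sub-mean-value definition of subharmonicity. -/
def SubharmonicOn {E : Type*} [NormedAddCommGroup E] [NormedSpace ℝ E] [MeasureSpace E]
    (u : E → ℝ) (s : Set E) : Prop :=
  UpperSemicontinuousOn u s ∧
    ∀ x ∈ s, ∀ r > (0 : ℝ), Metric.closedBall x r ⊆ s →
      u x ≤ ⨍ y in Metric.ball x r, u y

/-- The subharmonic envelope of an obstacle `b` on the unit ball. -/
noncomputable def subhEnv {n : ℕ} (b : EuclideanSpace ℝ (Fin n) → ℝ) :
    EuclideanSpace ℝ (Fin n) → ℝ :=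
  fun x => sSup {y : ℝ | ∃ f : EuclideanSpace ℝ (Fin n) → ℝ,
    SubharmonicOn f (ball (0 : EuclideanSpace ℝ (Fin n)) 1) ∧
    (∀ z ∈ ball (0 : EuclideanSpace ℝ (Fin n)) 1, f z ≤ b z) ∧ y = f x}

/-- `b` is `C^{1,1}` on the unit ball with norm bound `M`: bounds on the function,
its gradient, and a Lipschitz bound on the gradient (i.e. essential second derivative bound). -/
def C11On {n : ℕ} (b : EuclideanSpace ℝ (Fin n) → ℝ) (M : NNReal) : Prop :=
  (∀ x ∈ ball (0 : EuclideanSpace ℝ (Fin n)) 1,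
    DifferentiableAt ℝ b x ∧ |b x| ≤ M ∧ ‖fderiv ℝ b x‖ ≤ M) ∧
  LipschitzOnWith M (fderiv ℝ b) (ball (0 : EuclideanSpace ℝ (Fin n)) 1)

lemma taylor_est {n : ℕ} {M : NNReal} {b : EuclideanSpace ℝ (Fin n) → ℝ}
    (hb : C11On b M) {x₀ x : EuclideanSpace ℝ (Fin n)} {r : ℝ} (hrpos : 0 < r)
    (hsub : ball x₀ r ⊆ ball (0 : EuclideanSpace ℝ (Fin n)) 1) (hx : x ∈ ball x₀ r) :
    |b x - b x₀ - fderiv ℝ b x₀ (x - x₀)| ≤ M * r * ‖x - x₀‖ := by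
  set φ : EuclideanSpace ℝ (Fin n) → ℝ := fun y => b y - fderiv ℝ b x₀ y with hφ
  have hx₀ : x₀ ∈ ball x₀ r := mem_ball_self hrpos
  have key : ∀ y ∈ ball x₀ r,
      HasFDerivWithinAt φ (fderiv ℝ b y - fderiv ℝ b x₀) (ball x₀ r) y := by
    intro y hy
    exact (((hb.1 y (hsub hy)).1.hasFDerivAt).sub
      ((fderiv ℝ b x₀).hasFDerivAt)).hasFDerivWithinAt
  have bnd : ∀ y ∈ ball x₀ r, ‖fderiv ℝ b y - fderiv ℝ b x₀‖ ≤ (M : ℝ) * r := by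
    intro y hy
    have h1 : dist (fderiv ℝ b y) (fderiv ℝ b x₀) ≤ (M : ℝ) * dist y x₀ :=
      hb.2.dist_le_mul y (hsub hy) x₀ (hsub hx₀)
    rw [dist_eq_norm] at h1
    have : dist y x₀ ≤ r := le_of_lt (mem_ball.mp hy)
    nlinarith [M.coe_nonneg, dist_nonneg (x := y) (y := x₀)]
  have := (convex_ball x₀ r).norm_image_sub_le_of_norm_hasFDerivWithin_le key bnd hx₀ hx
  have heq : φ x - φ x₀ = b x - b x₀ - fderiv ℝ b x₀ (x - x₀) := by
    simp only [hφ, map_sub]; ring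
  rw [heq] at this
  simpa [Real.norm_eq_abs] using this

/-- The lower-bound half of the sandwich estimate in Proposition 5.1: near a crossing point
the rooftop `min {b₀, b₁}` stays strictly above an explicit affine function. -/
theorem rooftop_above_affine (n : ℕ) (M : NNReal)
    (b₀ b₁ : EuclideanSpace ℝ (Fin n) → ℝ)
    (hb₀ : C11On b₀ M) (hb₁ : C11On b₁ M)
    (x₀ : EuclideanSpace ℝ (Fin n)) (hx₀ : x₀ ∈ ball (0 : EuclideanSpace ℝ (Fin n)) (1/2))
    (hcross : b₀ x₀ = b₁ x₀)
    (hgrad : fderiv ℝ (fun y => b₁ y - b₀ y) x₀ ≠ 0)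
    (r' r : ℝ) (hr'pos : 0 < r') (hr' : r' ≤ 1 / (1 + (M : ℝ)))
    (hr : r = r' * ‖fderiv ℝ (fun y => b₁ y - b₀ y) x₀‖) (hr2 : r ≤ 1/2) :
    ∀ x ∈ ball x₀ r,
      min (b₀ x) (b₁ x) >
        b₀ x₀ - 2 * r' * ‖fderiv ℝ (fun y => b₁ y - b₀ y) x₀‖ ^ 2
          + fderiv ℝ b₀ x₀ (x - x₀) := by
  intro x hx
  set D := fderiv ℝ (fun y => b₁ y - b₀ y) x₀ with hD
  set L : ℝ := ‖D‖ with hL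
  have hLpos : 0 < L := norm_pos_iff.mpr hgrad
  have hrpos : 0 < r := hr ▸ mul_pos hr'pos hLpos
  have hx₀1 : x₀ ∈ ball (0 : EuclideanSpace ℝ (Fin n)) 1 := by
    have := mem_ball_zero_iff.mp hx₀; exact mem_ball_zero_iff.mpr (by linarith)
  have hsub : ball x₀ r ⊆ ball (0 : EuclideanSpace ℝ (Fin n)) 1 := by
    intro y hy
    have h1 : ‖y - x₀‖ < r := mem_ball_iff_norm.mp hy
    have h2 : ‖x₀‖ < 1/2 := mem_ball_zero_iff.mp hx₀
    have : ‖y‖ ≤ ‖x₀‖ + ‖y - x₀‖ := norm_le_insert' y x₀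
    exact mem_ball_zero_iff.mpr (by linarith)
  have hdx : ‖x - x₀‖ < r := mem_ball_iff_norm.mp hx
  have hdx0 : 0 ≤ ‖x - x₀‖ := norm_nonneg _
  -- differentiability at x₀
  have hd₀ : DifferentiableAt ℝ b₀ x₀ := (hb₀.1 x₀ hx₀1).1
  have hd₁ : DifferentiableAt ℝ b₁ x₀ := (hb₁.1 x₀ hx₀1).1
  have hDsplit : D = fderiv ℝ b₁ x₀ - fderiv ℝ b₀ x₀ := by
    rw [hD]; exact fderiv_sub hd₁ hd₀
  -- Taylor estimates
  have ht₀ := taylor_est hb₀ hrpos hsub hx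
  have ht₁ := taylor_est hb₁ hrpos hsub hx
  have hMr : (M : ℝ) * r * ‖x - x₀‖ ≤ (M : ℝ) * r * r :=
    mul_le_mul_of_nonneg_left (le_of_lt hdx) (mul_nonneg M.coe_nonneg (le_of_lt hrpos))
  -- key numeric fact : M * r' ≤ 1
  have hMr' : (M : ℝ) * r' ≤ 1 := by
    have hM : (0:ℝ) < 1 + M := by positivity
    rw [le_div_iff₀ hM] at hr'
    nlinarith [M.coe_nonneg]
  have hMrr : (M : ℝ) * r * r ≤ r' * L ^ 2 := by
    rw [hr]
    have : (M : ℝ) * (r' * L) * (r' * L) = ((M:ℝ) * r') * (r' * L^2) := by ring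
    rw [this]
    nlinarith [sq_nonneg L, mul_pos hr'pos (mul_pos hLpos hLpos)]
  -- bound on D (x - x₀)
  have hDx : -(r' * L ^ 2) < D (x - x₀) := by
    have h1 : |D (x - x₀)| ≤ L * ‖x - x₀‖ := by
      simpa [Real.norm_eq_abs] using D.le_opNorm (x - x₀)
    have h2 : L * ‖x - x₀‖ < L * r := mul_lt_mul_of_pos_left hdx hLpos
    have h3 : L * r = r' * L ^ 2 := by rw [hr]; ring
    have h4 := neg_abs_le (D (x - x₀))
    linarith
  -- split min
  have habs₀ := abs_le.mp ht₀
  have habs₁ := abs_le.mp ht₁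
  have hfd : fderiv ℝ b₁ x₀ (x - x₀) = fderiv ℝ b₀ x₀ (x - x₀) + D (x - x₀) := by
    rw [hDsplit]; simp
  rw [gt_iff_lt, lt_min_iff]
  have hpos : 0 < r' * L ^ 2 := by positivity
  constructor
  · linarith [habs₀.1, hMr, hMrr]
  · have := habs₁.1
    rw [← hcross, hfd] at this
    linarith [hMr, hMrr, hDx]
end

section
/- Let B₁ ⊂ ℝ^n and let b : B₁ → ℝ be Lipschitz with constant L. Then the subharmonic envelope b_env := sup{f subharmonic on B₁ : f ≤ b} satisfies: b_env is Lipschitz on B_{1/2} with Lipschitz constant bounded by C(n, L, ‖b‖_∞). -/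
open MeasureTheory Metric

section Auxiliary

open MeasureTheory.Measure Set Module
open scoped Pointwise

/-- Averages over balls transform naturally under a positive affine rescaling. -/
lemma avg_comp_affine {n : ℕ} (f : EuclideanSpace ℝ (Fin n) → ℝ) {l : ℝ} (hl : 0 < l)
    (a x : EuclideanSpace ℝ (Fin n)) {r : ℝ} (hr : 0 < r) :
    ⨍ y in ball x r, f (l • y + a) = ⨍ y in ball (l • x + a) (l * r), f y := by
  have hn : finrank ℝ (EuclideanSpace ℝ (Fin n)) = n := finrank_euclideanSpace_fin
  have hsb : l • ball x r = ball (l • x) (l * r) := by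
    rw [smul_ball hl.ne' x r, Real.norm_eq_abs, abs_of_pos hl]
  have stepA : ∫ y in ball x r, f (l • y + a) =
      (l ^ n)⁻¹ • ∫ z in ball (l • x) (l * r), f (z + a) := by
    have h := setIntegral_comp_smul_of_pos volume (fun z => f (z + a)) (ball x r) hl
    simpa [hn, hsb] using h
  have mp : MeasurePreserving (fun z : EuclideanSpace ℝ (Fin n) => z + a) volume volume :=
    measurePreserving_add_right volume a
  have emb : MeasurableEmbedding (fun z : EuclideanSpace ℝ (Fin n) => z + a) :=
    (Homeomorph.addRight a).measurableEmbedding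
  have hpre : (fun z : EuclideanSpace ℝ (Fin n) => z + a) ⁻¹' ball (l • x + a) (l * r)
      = ball (l • x) (l * r) := by
    ext w
    simp [mem_ball, dist_eq_norm, add_sub_add_right_eq_sub]
  have stepB : ∫ z in ball (l • x) (l * r), f (z + a)
      = ∫ w in ball (l • x + a) (l * r), f w := by
    have h := mp.setIntegral_preimage_emb emb f (ball (l • x + a) (l * r))
    rw [hpre] at h; exact h
  have hvol : volume (ball (l • x + a) (l * r)) = ENNReal.ofReal (l ^ n) * volume (ball x r) := by
    rw [addHaar_ball_center volume (l • x + a), ← addHaar_ball_center volume (l • x), ← hsb,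
      addHaar_smul_of_nonneg volume hl.le, hn]
  have hV : (volume (ball x r)).toReal ≠ 0 :=
    (ENNReal.toReal_pos (measure_ball_pos volume x hr).ne' measure_ball_lt_top.ne).ne'
  have hln : (0:ℝ) < l ^ n := pow_pos hl n
  rw [setAverage_eq, setAverage_eq, measureReal_def, measureReal_def, stepA, stepB, hvol, ENNReal.toReal_mul,
    ENNReal.toReal_ofReal hln.le]
  simp only [smul_eq_mul]
  rw [mul_inv]
  ring

/-- Constant functions are subharmonic. -/
lemma subharmonicOn_const {n : ℕ} (c : ℝ) (s : Set (EuclideanSpace ℝ (Fin n))) :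
    SubharmonicOn (fun _ => c) s := by
  refine ⟨fun x _ => upperSemicontinuousWithinAt_const, fun x _ r hr _ => ?_⟩
  rw [setAverage_const (measure_ball_pos volume x hr).ne' measure_ball_lt_top.ne]

/-- Subtracting a nonnegative constant preserves subharmonicity. -/
lemma subharmonicOn_sub_const {n : ℕ} {u : EuclideanSpace ℝ (Fin n) → ℝ}
    {s : Set (EuclideanSpace ℝ (Fin n))} (hu : SubharmonicOn u s) {c : ℝ} (hc : 0 ≤ c) :
    SubharmonicOn (fun z => u z - c) s := by
  constructor
  · intro x hx y hy
    have hy' : u x - c < y := hy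
    have : u x < y + c := by linarith
    filter_upwards [hu.1 x hx (y + c) this] with z hz
    linarith
  · intro x hx r hr hb
    have h := hu.2 x hx r hr hb
    haveI : Fact (volume (ball x r) < ⊤) := ⟨measure_ball_lt_top⟩
    by_cases hi : Integrable u (volume.restrict (ball x r))
    · have hV : (volume (ball x r)).toReal ≠ 0 :=
        (ENNReal.toReal_pos (measure_ball_pos volume x hr).ne' measure_ball_lt_top.ne).ne'
      have : ∫ y in ball x r, (u y - c) = (∫ y in ball x r, u y) - (volume (ball x r)).toReal • c := by
        rw [integral_sub hi (integrable_const c), setIntegral_const, measureReal_def]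
      rw [setAverage_eq, measureReal_def, this, smul_sub]
      rw [setAverage_eq, measureReal_def] at h
      have : (volume (ball x r)).toReal⁻¹ • (volume (ball x r)).toReal • c = c := by
        rw [smul_smul, inv_mul_cancel₀ hV, one_smul]
      rw [this]
      simp only [smul_eq_mul] at h ⊢
      linarith
    · have hi' : ¬ Integrable (fun y => u y - c) (volume.restrict (ball x r)) := by
        intro hint
        have : Integrable (fun y => (u y - c) + c) (volume.restrict (ball x r)) :=
          hint.add (integrable_const c)
        exact hi (by simpa using this)
      have h0 : (⨍ y in ball x r, u y) = 0 := by
        rw [setAverage_eq, integral_undef hi, smul_zero]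
      rw [setAverage_eq, integral_undef hi', smul_zero]
      have := h.trans_eq h0
      show u x - c ≤ 0
      linarith

/-- An affine contraction of the unit ball maps it into itself. -/
lemma affine_maps_ball {n : ℕ} {l : ℝ} (hl : 0 < l) {a : EuclideanSpace ℝ (Fin n)}
    (hla : l + ‖a‖ ≤ 1) :
    ∀ z ∈ ball (0 : EuclideanSpace ℝ (Fin n)) 1, l • z + a ∈
      ball (0 : EuclideanSpace ℝ (Fin n)) 1 := by
  intro z hz
  rw [mem_ball_zero_iff] at hz ⊢
  calc ‖l • z + a‖ ≤ ‖l • z‖ + ‖a‖ := norm_add_le _ _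
  _ = l * ‖z‖ + ‖a‖ := by rw [norm_smul, Real.norm_eq_abs, abs_of_pos hl]
  _ < l * 1 + ‖a‖ := by
      have := mul_lt_mul_of_pos_left hz hl
      linarith
  _ ≤ 1 := by linarith

/-- Subharmonicity is preserved by precomposition with an affine contraction of the ball. -/
lemma subharmonicOn_comp_affine {n : ℕ} {f : EuclideanSpace ℝ (Fin n) → ℝ}
    (hf : SubharmonicOn f (ball (0 : EuclideanSpace ℝ (Fin n)) 1))
    {l : ℝ} (hl : 0 < l) {a : EuclideanSpace ℝ (Fin n)} (hla : l + ‖a‖ ≤ 1) :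
    SubharmonicOn (fun z => f (l • z + a)) (ball (0 : EuclideanSpace ℝ (Fin n)) 1) := by
  have maps := affine_maps_ball hl hla
  have hTc : Continuous (fun z : EuclideanSpace ℝ (Fin n) => l • z + a) :=
    (continuous_const_smul l).add continuous_const
  constructor
  · intro x hx y hy
    have hy' : f (l • x + a) < y := hy
    have ev := hf.1 (l • x + a) (maps x hx) y hy'
    have ht : Filter.Tendsto (fun z : EuclideanSpace ℝ (Fin n) => l • z + a)
        (nhdsWithin x (ball (0 : EuclideanSpace ℝ (Fin n)) 1))
        (nhdsWithin (l • x + a) (ball (0 : EuclideanSpace ℝ (Fin n)) 1)) :=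
      hTc.continuousWithinAt.tendsto_nhdsWithin maps
    exact ht.eventually ev
  · intro x hx r hr hball
    have hsub : closedBall (l • x + a) (l * r) ⊆ ball (0 : EuclideanSpace ℝ (Fin n)) 1 := by
      intro w hw
      have hu : l⁻¹ • (w - a) ∈ closedBall x r := by
        rw [mem_closedBall, dist_eq_norm] at hw ⊢
        have : l⁻¹ • (w - a) - x = l⁻¹ • (w - (l • x + a)) := by
          have hx' : (l⁻¹ * l) • x = x := by rw [inv_mul_cancel₀ hl.ne', one_smul]
          rw [smul_sub, smul_sub, smul_add, smul_smul, hx']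
          abel
        rw [this, norm_smul, Real.norm_eq_abs, abs_of_pos (inv_pos.2 hl)]
        calc l⁻¹ * ‖w - (l • x + a)‖ ≤ l⁻¹ * (l * r) := by
              exact mul_le_mul_of_nonneg_left hw (inv_pos.2 hl).le
        _ = r := by field_simp
      have : l • (l⁻¹ • (w - a)) + a = w := by
        rw [smul_smul, mul_inv_cancel₀ hl.ne', one_smul]; abel
      rw [← this]
      exact maps _ (hball hu)
    have key := avg_comp_affine f hl a x hr
    calc f (l • x + a) ≤ ⨍ y in ball (l • x + a) (l * r), f y :=
          hf.2 _ (maps x hx) (l * r) (by positivity) hsub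
    _ = ⨍ y in ball x r, f (l • y + a) := key.symm

end Auxiliary

/-- Lipschitz regularity of the subharmonic envelope of a Lipschitz obstacle
(cf. Caffarelli, Lemma 3(a)). -/
theorem subh_envelope_lipschitz (n : ℕ) (L : NNReal) (B : ℝ) :
    ∃ C : NNReal, ∀ b : EuclideanSpace ℝ (Fin n) → ℝ,
      LipschitzOnWith L b (ball (0 : EuclideanSpace ℝ (Fin n)) 1) →
      (∀ x ∈ ball (0 : EuclideanSpace ℝ (Fin n)) 1, |b x| ≤ B) →
      LipschitzOnWith C (subhEnv b) (ball (0 : EuclideanSpace ℝ (Fin n)) (1/2)) := by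
  refine ⟨6 * L + (12 * B).toNNReal, ?_⟩
  intro b hb hB
  set C : NNReal := 6 * L + (12 * B).toNNReal with hCdef
  set S : EuclideanSpace ℝ (Fin n) → Set ℝ := fun x =>
    {y : ℝ | ∃ f : EuclideanSpace ℝ (Fin n) → ℝ,
      SubharmonicOn f (ball (0 : EuclideanSpace ℝ (Fin n)) 1) ∧
      (∀ z ∈ ball (0 : EuclideanSpace ℝ (Fin n)) 1, f z ≤ b z) ∧ y = f x} with hSdef
  have hvS : ∀ x, subhEnv b x = sSup (S x) := fun _ => rfl
  have hB0 : 0 ≤ B :=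
    le_trans (abs_nonneg _) (hB 0 (mem_ball_self one_pos))
  have hmem : ∀ x, -B ∈ S x := by
    intro x
    exact ⟨fun _ => -B, subharmonicOn_const _ _,
      fun z hz => (abs_le.1 (hB z hz)).1, rfl⟩
  have hne : ∀ x, (S x).Nonempty := fun x => ⟨-B, hmem x⟩
  have hbdd : ∀ x ∈ ball (0 : EuclideanSpace ℝ (Fin n)) 1, BddAbove (S x) := by
    intro x hx
    refine ⟨B, ?_⟩
    rintro t ⟨f, hfs, hfle, rfl⟩
    exact (hfle x hx).trans (abs_le.1 (hB x hx)).2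
  have hvle : ∀ x ∈ ball (0 : EuclideanSpace ℝ (Fin n)) 1, subhEnv b x ≤ B := by
    intro x hx
    rw [hvS]
    refine csSup_le (hne x) ?_
    rintro t ⟨f, hfs, hfle, rfl⟩
    exact (hfle x hx).trans (abs_le.1 (hB x hx)).2
  have hvge : ∀ x ∈ ball (0 : EuclideanSpace ℝ (Fin n)) 1, -B ≤ subhEnv b x := by
    intro x hx
    rw [hvS]
    exact le_csSup (hbdd x hx) (hmem x)
  have hC1 : 6 * (L : ℝ) ≤ (C : ℝ) := by
    rw [hCdef]
    push_cast
    have : (0:ℝ) ≤ ((12 * B).toNNReal : ℝ) := NNReal.coe_nonneg _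
    linarith
  have hC2 : 12 * B ≤ (C : ℝ) := by
    rw [hCdef]
    push_cast
    have h1 : 12 * B ≤ ((12 * B).toNNReal : ℝ) := Real.le_coe_toNNReal _
    have h2 : (0:ℝ) ≤ 6 * (L:ℝ) := by positivity
    linarith
  have half_sub : ball (0 : EuclideanSpace ℝ (Fin n)) (1/2) ⊆
      ball (0 : EuclideanSpace ℝ (Fin n)) 1 := ball_subset_ball (by norm_num)
  have key : ∀ x ∈ ball (0 : EuclideanSpace ℝ (Fin n)) (1/2),
      ∀ y ∈ ball (0 : EuclideanSpace ℝ (Fin n)) (1/2),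
      subhEnv b y ≤ subhEnv b x + C * dist y x := by
    intro x hx y hy
    have hx1 := half_sub hx
    have hy1 := half_sub hy
    have hd0 : 0 ≤ dist y x := dist_nonneg
    by_cases hxy : y = x
    · subst hxy
      simp
    have hdpos : 0 < dist y x := dist_pos.2 hxy
    set d := dist y x with hd
    by_cases hcase : 1/6 ≤ d
    · have h2B : 2 * B ≤ (C:ℝ) * d := by nlinarith
      have := hvle y hy1
      have := hvge x hx1
      linarith
    · push_neg at hcase
      set l : ℝ := 1 - 3 * d with hldef
      have hl : 0 < l := by rw [hldef]; linarith
      set a := y - l • x with hadef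
      have hxn : ‖x‖ < 1/2 := mem_ball_zero_iff.1 hx
      have hyxn : ‖y - x‖ = d := by rw [hd, dist_eq_norm]
      have hsplit : a = (y - x) + (3*d) • x := by
        rw [hadef, hldef]
        module
      have ha : ‖a‖ ≤ 5/2 * d := by
        have h1l : ‖(3*d) • x‖ = (3*d) * ‖x‖ := by
          rw [norm_smul, Real.norm_eq_abs, abs_of_nonneg (by linarith : (0:ℝ) ≤ 3*d)]
        calc ‖a‖ ≤ ‖y - x‖ + ‖(3*d) • x‖ := by rw [hsplit]; exact norm_add_le _ _
        _ = d + (3*d) * ‖x‖ := by rw [hyxn, h1l]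
        _ ≤ d + (3*d) * (1/2) := by nlinarith
        _ = 5/2 * d := by ring
      have hla : l + ‖a‖ ≤ 1 := by rw [hldef]; linarith
      have hTx : l • x + a = y := by rw [hadef]; abel
      have hshift : ∀ z ∈ ball (0 : EuclideanSpace ℝ (Fin n)) 1, ‖(l • z + a) - z‖ ≤ 6 * d := by
        intro z hz
        have hz1 : ‖z‖ < 1 := mem_ball_zero_iff.1 hz
        have heq : (l • z + a) - z = a - (3*d) • z := by
          rw [hldef, sub_smul, one_smul]
          module
        calc ‖(l • z + a) - z‖ = ‖a - (3*d) • z‖ := by rw [heq]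
        _ ≤ ‖a‖ + ‖(3*d) • z‖ := norm_sub_le _ _
        _ = ‖a‖ + (3*d) * ‖z‖ := by
            rw [norm_smul, Real.norm_eq_abs, abs_of_nonneg (by linarith : (0:ℝ) ≤ 3*d)]
        _ ≤ 5/2*d + (3*d) * 1 := by nlinarith
        _ ≤ 6 * d := by linarith
      rw [hvS]
      refine csSup_le (hne y) ?_
      rintro t ⟨f, hfs, hfle, rfl⟩
      have hg : SubharmonicOn (fun z => f (l • z + a) - 6*L*d)
          (ball (0 : EuclideanSpace ℝ (Fin n)) 1) :=
        subharmonicOn_sub_const (subharmonicOn_comp_affine hfs hl hla) (by positivity)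
      have hgle : ∀ z ∈ ball (0 : EuclideanSpace ℝ (Fin n)) 1, f (l • z + a) - 6*L*d ≤ b z := by
        intro z hz
        have hTz := affine_maps_ball hl hla z hz
        have h1 := hfle _ hTz
        have h2 : dist (b (l • z + a)) (b z) ≤ L * dist (l • z + a) z :=
          hb.dist_le_mul _ hTz _ hz
        rw [Real.dist_eq, dist_eq_norm] at h2
        have h3 : |b (l • z + a) - b z| ≤ L * (6*d) := by
          refine h2.trans ?_
          exact mul_le_mul_of_nonneg_left (hshift z hz) L.2
        have h4 := (abs_le.1 h3).2
        linarith
      have hmemg : f y - 6*L*d ∈ S x := by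
        refine ⟨fun z => f (l • z + a) - 6*L*d, hg, hgle, ?_⟩
        show f y - 6*(L:ℝ)*d = f (l • x + a) - 6*(L:ℝ)*d
        rw [hTx]
      have hle : f y - 6*L*d ≤ subhEnv b x := by
        rw [hvS]
        exact le_csSup (hbdd x hx1) hmemg
      have h6L : 6*(L:ℝ)*d ≤ C*d := by
        exact mul_le_mul_of_nonneg_right hC1 hd0
      linarith
  refine LipschitzOnWith.of_dist_le_mul ?_
  intro x hx y hy
  rw [Real.dist_eq, abs_sub_le_iff]
  have h1 := key y hy x hx
  have h2 := key x hx y hy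
  rw [dist_comm y x] at h2
  constructor <;> linarith
end
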